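/- arXiv:1710.02655 — 2 statements merged into one kernel-verified Lean document; each statement's English description precedes it below -/
import Mathlib

section
/- Set c_W = e^{M}, κ = γ_∞ √(a⁺ λ(O_U)), and fix R > 0; set R' = c_W κ R. Assume that for all r, r̄ ∈ ℝ with |r|, |r̄| ≤ R' one has |m₀(a,x;r) − m₀(a,x;r̄)| ≤ L |r − r̄| for a.e. (a,x), with some L ≥ 0. Define S₂(u)(a,x) = h(a,x) · m₀(a,x; U(e^{W} u)) · u(a,x). Then S₂ maps H into H and for all u, ū ∈ H with ‖u‖_H ≤ R and ‖ū‖_H ≤ R one has ‖S₂(u) − S₂(ū)‖_H ≤ c₀ · ( c_W · L · κ · R + m_{0∞} ) · ‖u − ū‖_H. That is, S₂ is locally Lipschitz continuous on H. -/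
open MeasureTheory Set

/-- With `c_W = e^M`, `κ = γ_∞ √(a⁺ λ(O_U))`, `R > 0`, `R' = c_W κ R`, if
`m₀(a,x;·)` is `L`-Lipschitz on `[-R',R']` a.e., then
`S₂(u)(a,x) = h(a,x) m₀(a,x;U(e^W u)) u(a,x)` maps `H` into `H` and is locally Lipschitz:
`‖S₂(u) − S₂(ū)‖_H ≤ c₀ (c_W L κ R + m_{0∞}) ‖u − ū‖_H` whenever `‖u‖, ‖ū‖ ≤ R`. -/
theorem stmt2
    (d : ℕ) (hd : 1 ≤ d)
    (O : Set (Fin d → ℝ)) (hO : IsOpen O) (hObd : Bornology.IsBounded O)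
    (aplus : ℝ) (ha : 0 < aplus)
    (μ : Measure (ℝ × (Fin d → ℝ)))
    (hμ : μ = (volume.restrict (Set.Ioo 0 aplus)).prod (volume.restrict O))
    (OU : Set (Fin d → ℝ)) (hOUO : OU ⊆ O) (hOUm : MeasurableSet OU)
    (γ : ℝ × (Fin d → ℝ) → ℝ) (hγm : Measurable γ)
    (γinf : ℝ) (hγinf : 0 ≤ γinf)
    (hγb : ∀ᵐ p ∂(μ.restrict (Set.univ ×ˢ OU)), 0 ≤ γ p ∧ γ p ≤ γinf)
    (W : ℝ × (Fin d → ℝ) → ℝ) (hWm : Measurable W)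
    (M : ℝ) (hM : 0 ≤ M) (hWb : ∀ᵐ p ∂μ, |W p| ≤ M)
    (m₀ : ℝ × (Fin d → ℝ) → ℝ → ℝ) (hm₀m : Measurable (Function.uncurry m₀))
    (m0inf : ℝ) (hm₀b : ∀ r : ℝ, ∀ᵐ p ∂μ, 0 ≤ m₀ p r ∧ m₀ p r ≤ m0inf)
    (h : ℝ × (Fin d → ℝ) → ℝ) (hhm : Measurable h)
    (c₀ : ℝ) (hc₀ : 0 ≤ c₀) (hhb : ∀ᵐ p ∂μ, 0 ≤ h p ∧ h p ≤ c₀)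
    (Uexp : Lp ℝ 2 μ → ℝ)
    (hUexp : ∀ u : Lp ℝ 2 μ,
      Uexp u = ∫ p in Set.univ ×ˢ OU, γ p * (Real.exp (W p) * u p) ∂μ)
    (cW κ R R' L : ℝ)
    (hcW : cW = Real.exp M)
    (hκ : κ = γinf * Real.sqrt (aplus * (volume OU).toReal))
    (hR : 0 < R) (hR' : R' = cW * κ * R)
    (hL : 0 ≤ L)
    (hLip : ∀ r r' : ℝ, |r| ≤ R' → |r'| ≤ R' →
      ∀ᵐ p ∂μ, |m₀ p r - m₀ p r'| ≤ L * |r - r'|)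
    (S₂ : Lp ℝ 2 μ → (ℝ × (Fin d → ℝ)) → ℝ)
    (hS₂ : ∀ (u : Lp ℝ 2 μ) (p : ℝ × (Fin d → ℝ)),
      S₂ u p = h p * m₀ p (Uexp u) * u p) :
    (∀ u : Lp ℝ 2 μ, MemLp (S₂ u) 2 μ) ∧
    (∀ u v : Lp ℝ 2 μ, ‖u‖ ≤ R → ‖v‖ ≤ R →
      eLpNorm (S₂ u - S₂ v) 2 μ ≤
        ENNReal.ofReal (c₀ * (cW * L * κ * R + m0inf) * ‖u - v‖)) := by
  classical
  rcases eq_or_ne μ 0 with rfl | hμ0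
  · refine ⟨fun u => ⟨aestronglyMeasurable_zero_measure _,
      by simp [eLpNorm_measure_zero]⟩, fun u v _ _ => ?_⟩
    simp [eLpNorm_measure_zero]
  -- basic positivity facts
  haveI : (ae μ).NeBot := ae_neBot.mpr hμ0
  obtain ⟨p₀, hp₀⟩ := (hm₀b 0).exists
  have hm0inf : 0 ≤ m0inf := le_trans hp₀.1 hp₀.2
  have hκ0 : 0 ≤ κ := by
    rw [hκ]; exact mul_nonneg hγinf (Real.sqrt_nonneg _)
  have hcW0 : 0 < cW := hcW ▸ Real.exp_pos M
  -- measurability of the set and finiteness of μ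
  have hsmeas : MeasurableSet (Set.univ ×ˢ OU : Set (ℝ × (Fin d → ℝ))) :=
    MeasurableSet.univ.prod hOUm
  haveI : IsFiniteMeasure μ := by
    constructor
    rw [hμ, ← Set.univ_prod_univ, Measure.prod_prod, Measure.restrict_apply_univ,
      Measure.restrict_apply_univ]
    exact ENNReal.mul_lt_top (by simp [Real.volume_Ioo]) hObd.measure_lt_top
  have hμs : (μ (Set.univ ×ˢ OU)).toReal = aplus * (volume OU).toReal := by
    rw [hμ, Measure.prod_prod, Measure.restrict_apply_univ, Measure.restrict_apply hOUm,
      Set.inter_eq_self_of_subset_left hOUO, Real.volume_Ioo, sub_zero, ENNReal.toReal_mul,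
      ENNReal.toReal_ofReal ha.le]
  -- the kernel g
  set C : ℝ := γinf * Real.exp M with hC
  have hC0 : 0 ≤ C := mul_nonneg hγinf (Real.exp_pos M).le
  set g : (ℝ × (Fin d → ℝ)) → ℝ :=
    (Set.univ ×ˢ OU).indicator (fun p => γ p * Real.exp (W p)) with hg
  have hgmeas : Measurable g := (hγm.mul (Real.measurable_exp.comp hWm)).indicator hsmeas
  have hγae : ∀ᵐ p ∂μ, p ∈ (Set.univ ×ˢ OU : Set (ℝ × (Fin d → ℝ))) →
      (0 ≤ γ p ∧ γ p ≤ γinf) := (ae_restrict_iff' hsmeas).mp hγb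
  have hgbd' : ∀ᵐ p ∂μ, ‖g p‖ ≤
      ‖(Set.univ ×ˢ OU).indicator (fun _ : ℝ × (Fin d → ℝ) => C) p‖ := by
    filter_upwards [hγae, hWb] with p h1 h2
    by_cases hp : p ∈ (Set.univ ×ˢ OU : Set (ℝ × (Fin d → ℝ)))
    · rw [hg]
      rw [Set.indicator_of_mem hp, Set.indicator_of_mem hp]
      obtain ⟨hγ1, hγ2⟩ := h1 hp
      rw [Real.norm_eq_abs, Real.norm_eq_abs, abs_mul, abs_of_nonneg hγ1, Real.abs_exp,
        abs_of_nonneg hC0, hC]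
      exact mul_le_mul hγ2 (Real.exp_le_exp.mpr ((le_abs_self _).trans h2))
        (Real.exp_pos _).le hγinf
    · rw [hg]
      rw [Set.indicator_of_notMem hp, Set.indicator_of_notMem hp]
  have hgbd : ∀ᵐ p ∂μ, ‖g p‖ ≤ C := by
    filter_upwards [hgbd'] with p hp
    refine hp.trans ?_
    by_cases hps : p ∈ (Set.univ ×ˢ OU : Set (ℝ × (Fin d → ℝ)))
    · rw [Set.indicator_of_mem hps, Real.norm_eq_abs, abs_of_nonneg hC0]
    · rw [Set.indicator_of_notMem hps]; simpa using hC0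
  have hgmem : MemLp g 2 μ := MemLp.of_bound hgmeas.aestronglyMeasurable C hgbd
  -- the eLpNorm bound of g
  have hgsn : eLpNorm g 2 μ ≤ ENNReal.ofReal (cW * κ) := by
    calc eLpNorm g 2 μ
        ≤ eLpNorm ((Set.univ ×ˢ OU).indicator (fun _ : ℝ × (Fin d → ℝ) => C)) 2 μ :=
          eLpNorm_mono_ae hgbd'
      _ = ‖C‖₊ * μ (Set.univ ×ˢ OU) ^ (1 / (2 : ENNReal).toReal) :=
          eLpNorm_indicator_const hsmeas two_ne_zero ENNReal.ofNat_ne_top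
      _ ≤ ENNReal.ofReal (cW * κ) := by
          have hfin : μ (Set.univ ×ˢ OU) ≠ ⊤ := (measure_lt_top μ _).ne
          rw [← enorm_eq_nnnorm, Real.enorm_eq_ofReal hC0, ← ENNReal.ofReal_toReal hfin, ENNReal.toReal_ofNat,
            ENNReal.ofReal_rpow_of_nonneg ENNReal.toReal_nonneg (by norm_num),
            ← ENNReal.ofReal_mul hC0]
          refine ENNReal.ofReal_le_ofReal (le_of_eq ?_)
          rw [hμs, hC, hcW, hκ, ← Real.sqrt_eq_rpow]
          ring
  set G : Lp ℝ 2 μ := hgmem.toLp g with hG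
  have hGnorm : ‖G‖ ≤ cW * κ := by
    rw [hG, Lp.norm_toLp]
    exact ENNReal.toReal_le_of_le_ofReal (mul_nonneg hcW0.le hκ0) hgsn
  -- Uexp as an inner product
  have hUinner : ∀ u : Lp ℝ 2 μ, Uexp u = (inner ℝ G u : ℝ) := by
    intro u
    rw [hUexp u, MeasureTheory.L2.inner_def, ← integral_indicator hsmeas]
    refine integral_congr_ae ?_
    filter_upwards [hgmem.coeFn_toLp] with p hp
    have : (G : (ℝ × (Fin d → ℝ)) → ℝ) p = g p := hp
    rw [RCLike.inner_apply, RCLike.conj_to_real, this, hg]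
    by_cases hps : p ∈ (Set.univ ×ˢ OU : Set (ℝ × (Fin d → ℝ)))
    · rw [Set.indicator_of_mem hps, Set.indicator_of_mem hps]; ring
    · rw [Set.indicator_of_notMem hps, Set.indicator_of_notMem hps, mul_zero]
  have hUbd : ∀ u : Lp ℝ 2 μ, |Uexp u| ≤ cW * κ * ‖u‖ := by
    intro u
    rw [hUinner u]
    exact (abs_real_inner_le_norm G u).trans
      (mul_le_mul_of_nonneg_right hGnorm (norm_nonneg u))
  have hUdiff : ∀ u v : Lp ℝ 2 μ, |Uexp u - Uexp v| ≤ cW * κ * ‖u - v‖ := by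
    intro u v
    have : Uexp u - Uexp v = Uexp (u - v) := by
      rw [hUinner, hUinner, hUinner]
      exact (inner_sub_right G u v).symm
    rw [this]; exact hUbd _
  -- measurability helpers
  have hmeasm₀ : ∀ r : ℝ, Measurable fun p => m₀ p r := fun r =>
    hm₀m.comp (measurable_id.prodMk measurable_const)
  have hS₂eq : ∀ u : Lp ℝ 2 μ, S₂ u = fun p => h p * m₀ p (Uexp u) * ((u : (ℝ × (Fin d → ℝ)) → ℝ) p) :=
    fun u => funext fun p => hS₂ u p
  have hS₂meas : ∀ u : Lp ℝ 2 μ, AEStronglyMeasurable (S₂ u) μ := by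
    intro u
    rw [hS₂eq u]
    exact ((hhm.mul (hmeasm₀ _)).aestronglyMeasurable).mul (Lp.aestronglyMeasurable u)
  -- Part 1
  have hmem : ∀ u : Lp ℝ 2 μ, MemLp (S₂ u) 2 μ := by
    intro u
    refine MemLp.of_le ((Lp.memLp u).const_mul (c₀ * m0inf)) (hS₂meas u) ?_
    filter_upwards [hhb, hm₀b (Uexp u)] with p h1 h2
    rw [hS₂, Real.norm_eq_abs, Real.norm_eq_abs, abs_mul, abs_mul]
    have e1 : |h p| ≤ c₀ := by rw [abs_of_nonneg h1.1]; exact h1.2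
    have e2 : |m₀ p (Uexp u)| ≤ m0inf := by rw [abs_of_nonneg h2.1]; exact h2.2
    calc |h p| * |m₀ p (Uexp u)| * |(u : (ℝ × (Fin d → ℝ)) → ℝ) p|
        ≤ c₀ * m0inf * |(u : (ℝ × (Fin d → ℝ)) → ℝ) p| :=
          mul_le_mul_of_nonneg_right (mul_le_mul e1 e2 (abs_nonneg _) hc₀) (abs_nonneg _)
      _ ≤ |c₀ * m0inf| * |(u : (ℝ × (Fin d → ℝ)) → ℝ) p| :=
          mul_le_mul_of_nonneg_right (le_abs_self _) (abs_nonneg _)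
      _ = |c₀ * m0inf * (u : (ℝ × (Fin d → ℝ)) → ℝ) p| := (abs_mul _ _).symm
  refine ⟨hmem, fun u v hu hv => ?_⟩
  -- Part 2
  have hr₁ : |Uexp u| ≤ R' := by
    rw [hR']
    exact (hUbd u).trans (mul_le_mul_of_nonneg_left hu (mul_nonneg hcW0.le hκ0))
  have hr₂ : |Uexp v| ≤ R' := by
    rw [hR']
    exact (hUbd v).trans (mul_le_mul_of_nonneg_left hv (mul_nonneg hcW0.le hκ0))
  have hLip' := hLip (Uexp u) (Uexp v) hr₁ hr₂
  set r₁ := Uexp u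
  set r₂ := Uexp v
  set F₁ : (ℝ × (Fin d → ℝ)) → ℝ :=
    fun p => h p * (m₀ p r₁ - m₀ p r₂) * ((u : (ℝ × (Fin d → ℝ)) → ℝ) p) with hF₁
  set F₂ : (ℝ × (Fin d → ℝ)) → ℝ :=
    fun p => h p * m₀ p r₂ *
      ((u : (ℝ × (Fin d → ℝ)) → ℝ) p - (v : (ℝ × (Fin d → ℝ)) → ℝ) p) with hF₂
  have hdecomp : S₂ u - S₂ v = F₁ + F₂ := by
    funext p
    simp only [Pi.sub_apply, Pi.add_apply, hS₂, hF₁, hF₂]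
    ring
  have hF₁meas : AEStronglyMeasurable F₁ μ :=
    ((hhm.mul ((hmeasm₀ r₁).sub (hmeasm₀ r₂))).aestronglyMeasurable).mul
      (Lp.aestronglyMeasurable u)
  have hF₂meas : AEStronglyMeasurable F₂ μ :=
    ((hhm.mul (hmeasm₀ r₂)).aestronglyMeasurable).mul
      ((Lp.aestronglyMeasurable u).sub (Lp.aestronglyMeasurable v))
  have hnu : eLpNorm ((u : (ℝ × (Fin d → ℝ)) → ℝ)) 2 μ = ENNReal.ofReal ‖u‖ := by
    rw [Lp.norm_def, ENNReal.ofReal_toReal (Lp.eLpNorm_ne_top u)]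
  have hnuv : eLpNorm ((u : (ℝ × (Fin d → ℝ)) → ℝ) - (v : (ℝ × (Fin d → ℝ)) → ℝ)) 2 μ
      = ENNReal.ofReal ‖u - v‖ := by
    rw [← eLpNorm_congr_ae (Lp.coeFn_sub u v), Lp.norm_def,
      ENNReal.ofReal_toReal (Lp.eLpNorm_ne_top (u - v))]
  have hrr : |r₁ - r₂| ≤ cW * κ * ‖u - v‖ := hUdiff u v
  -- bound on F₁
  have hA : eLpNorm F₁ 2 μ ≤ ENNReal.ofReal (c₀ * (cW * L * κ * R) * ‖u - v‖) := by
    have hb : ∀ᵐ p ∂μ, ‖F₁ p‖ ≤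
        ‖(c₀ * (L * |r₁ - r₂|)) • (u : (ℝ × (Fin d → ℝ)) → ℝ) p‖ := by
      filter_upwards [hhb, hLip'] with p h1 h2
      rw [hF₁]
      rw [Real.norm_eq_abs, Real.norm_eq_abs, smul_eq_mul]
      have e1 : |h p| ≤ c₀ := by rw [abs_of_nonneg h1.1]; exact h1.2
      calc |h p * (m₀ p r₁ - m₀ p r₂) * (u : (ℝ × (Fin d → ℝ)) → ℝ) p|
          = |h p| * |m₀ p r₁ - m₀ p r₂| * |(u : (ℝ × (Fin d → ℝ)) → ℝ) p| := by
            rw [abs_mul, abs_mul]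
        _ ≤ c₀ * (L * |r₁ - r₂|) * |(u : (ℝ × (Fin d → ℝ)) → ℝ) p| :=
            mul_le_mul_of_nonneg_right
              (mul_le_mul e1 h2 (abs_nonneg _) hc₀) (abs_nonneg _)
        _ ≤ |c₀ * (L * |r₁ - r₂|)| * |(u : (ℝ × (Fin d → ℝ)) → ℝ) p| :=
            mul_le_mul_of_nonneg_right (le_abs_self _) (abs_nonneg _)
        _ = |c₀ * (L * |r₁ - r₂|) * (u : (ℝ × (Fin d → ℝ)) → ℝ) p| := (abs_mul _ _).symm
    calc eLpNorm F₁ 2 μ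
        ≤ eLpNorm ((c₀ * (L * |r₁ - r₂|)) • (u : (ℝ × (Fin d → ℝ)) → ℝ)) 2 μ :=
          eLpNorm_mono_ae hb
      _ = ‖c₀ * (L * |r₁ - r₂|)‖₊ * eLpNorm ((u : (ℝ × (Fin d → ℝ)) → ℝ)) 2 μ :=
          eLpNorm_const_smul _ _ _ _
      _ ≤ ENNReal.ofReal (c₀ * (cW * L * κ * R) * ‖u - v‖) := by
          rw [hnu, ← enorm_eq_nnnorm, Real.enorm_eq_ofReal (mul_nonneg hc₀ (mul_nonneg hL (abs_nonneg _))),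
            ← ENNReal.ofReal_mul (mul_nonneg hc₀ (mul_nonneg hL (abs_nonneg _)))]
          refine ENNReal.ofReal_le_ofReal ?_
          have h3 : c₀ * (L * |r₁ - r₂|) * ‖u‖ ≤ c₀ * (L * (cW * κ * ‖u - v‖)) * R := by
            have := norm_nonneg (u - v)
            nlinarith [abs_nonneg (r₁ - r₂), norm_nonneg u,
              mul_le_mul hrr hu (norm_nonneg u) (mul_nonneg (mul_nonneg hcW0.le hκ0) this),
              mul_nonneg hc₀ hL]
          refine h3.trans (le_of_eq ?_); ring
  -- bound on F₂
  have hB : eLpNorm F₂ 2 μ ≤ ENNReal.ofReal (c₀ * m0inf * ‖u - v‖) := by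
    have hb : ∀ᵐ p ∂μ, ‖F₂ p‖ ≤
        ‖(c₀ * m0inf) • ((u : (ℝ × (Fin d → ℝ)) → ℝ) - (v : (ℝ × (Fin d → ℝ)) → ℝ)) p‖ := by
      filter_upwards [hhb, hm₀b r₂] with p h1 h2
      rw [hF₂]
      simp only [Pi.smul_apply, Pi.sub_apply, smul_eq_mul]
      rw [Real.norm_eq_abs, Real.norm_eq_abs]
      have e1 : |h p * m₀ p r₂| ≤ c₀ * m0inf := by
        rw [abs_mul, abs_of_nonneg h1.1, abs_of_nonneg h2.1]
        exact mul_le_mul h1.2 h2.2 h2.1 hc₀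
      calc |h p * m₀ p r₂ * ((u : (ℝ × (Fin d → ℝ)) → ℝ) p - (v : (ℝ × (Fin d → ℝ)) → ℝ) p)|
          = |h p * m₀ p r₂| * |(u : (ℝ × (Fin d → ℝ)) → ℝ) p - (v : (ℝ × (Fin d → ℝ)) → ℝ) p| :=
            abs_mul _ _
        _ ≤ (c₀ * m0inf) * |(u : (ℝ × (Fin d → ℝ)) → ℝ) p - (v : (ℝ × (Fin d → ℝ)) → ℝ) p| :=
            mul_le_mul_of_nonneg_right e1 (abs_nonneg _)
        _ ≤ |c₀ * m0inf| * |(u : (ℝ × (Fin d → ℝ)) → ℝ) p - (v : (ℝ × (Fin d → ℝ)) → ℝ) p| :=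
            mul_le_mul_of_nonneg_right (le_abs_self _) (abs_nonneg _)
        _ = |c₀ * m0inf * ((u : (ℝ × (Fin d → ℝ)) → ℝ) p - (v : (ℝ × (Fin d → ℝ)) → ℝ) p)| :=
            (abs_mul _ _).symm
    calc eLpNorm F₂ 2 μ
        ≤ eLpNorm ((c₀ * m0inf) • ((u : (ℝ × (Fin d → ℝ)) → ℝ) - (v : (ℝ × (Fin d → ℝ)) → ℝ))) 2 μ :=
          eLpNorm_mono_ae hb
      _ = ‖c₀ * m0inf‖₊ *
          eLpNorm ((u : (ℝ × (Fin d → ℝ)) → ℝ) - (v : (ℝ × (Fin d → ℝ)) → ℝ)) 2 μ :=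
          eLpNorm_const_smul _ _ _ _
      _ = ENNReal.ofReal (c₀ * m0inf * ‖u - v‖) := by
          rw [hnuv, ← enorm_eq_nnnorm, Real.enorm_eq_ofReal (mul_nonneg hc₀ hm0inf),
            ← ENNReal.ofReal_mul (mul_nonneg hc₀ hm0inf)]
  rw [hdecomp]
  calc eLpNorm (F₁ + F₂) 2 μ
      ≤ eLpNorm F₁ 2 μ + eLpNorm F₂ 2 μ := eLpNorm_add_le hF₁meas hF₂meas one_le_two
    _ ≤ ENNReal.ofReal (c₀ * (cW * L * κ * R) * ‖u - v‖) +
        ENNReal.ofReal (c₀ * m0inf * ‖u - v‖) := add_le_add hA hB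
    _ = ENNReal.ofReal (c₀ * (cW * L * κ * R + m0inf) * ‖u - v‖) := by
        rw [← ENNReal.ofReal_add
          (by positivity) (by positivity)]
        congr 1; ring
end

section
/- Set c_W = e^{M}, κ = γ_∞ √(a⁺ λ(O_U)), and fix R > 0; set R' = c_W κ R. Assume that for all r, r̄ ∈ ℝ with |r|, |r̄| ≤ R' one has |μ_S(a,x;r) − μ_S(a,x;r̄)| ≤ L |r − r̄| for a.e. (a,x), with some L ≥ 0. Define S₁(u)(a,x) = μ_S(a,x; U(e^{W} u)) · u(a,x). Then S₁ maps H into H and for all u, ū ∈ H with ‖u‖_H ≤ R and ‖ū‖_H ≤ R one has ‖S₁(u) − S₁(ū)‖_H ≤ ( c_W · L · κ · R + μ_∞ ) · ‖u − ū‖_H. That is, S₁ is locally Lipschitz continuous on H. -/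
open MeasureTheory Set
open scoped ENNReal

/-- With `c_W = e^M`, `κ = γ_∞ √(a⁺ λ(O_U))`, `R > 0`, `R' = c_W κ R`, if
`μ_S(a,x;·)` is `L`-Lipschitz on `[-R',R']` a.e., then
`S₁(u)(a,x) = μ_S(a,x;U(e^W u)) u(a,x)` maps `H` into `H` and is locally Lipschitz:
`‖S₁(u) − S₁(ū)‖_H ≤ (c_W L κ R + μ_∞) ‖u − ū‖_H` whenever `‖u‖, ‖ū‖ ≤ R`. -/
theorem stmt3
    (d : ℕ) (hd : 1 ≤ d)
    (O : Set (Fin d → ℝ)) (hO : IsOpen O) (hObd : Bornology.IsBounded O)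
    (aplus : ℝ) (ha : 0 < aplus)
    (μ : Measure (ℝ × (Fin d → ℝ)))
    (hμ : μ = (volume.restrict (Set.Ioo 0 aplus)).prod (volume.restrict O))
    (OU : Set (Fin d → ℝ)) (hOUO : OU ⊆ O) (hOUm : MeasurableSet OU)
    (γ : ℝ × (Fin d → ℝ) → ℝ) (hγm : Measurable γ)
    (γinf : ℝ) (hγinf : 0 ≤ γinf)
    (hγb : ∀ᵐ p ∂(μ.restrict (Set.univ ×ˢ OU)), 0 ≤ γ p ∧ γ p ≤ γinf)
    (W : ℝ × (Fin d → ℝ) → ℝ) (hWm : Measurable W)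
    (M : ℝ) (hM : 0 ≤ M) (hWb : ∀ᵐ p ∂μ, |W p| ≤ M)
    (μS : ℝ × (Fin d → ℝ) → ℝ → ℝ) (hμSm : Measurable (Function.uncurry μS))
    (μinf : ℝ) (hμSb : ∀ r : ℝ, ∀ᵐ p ∂μ, 0 ≤ μS p r ∧ μS p r ≤ μinf)
    (Uexp : Lp ℝ 2 μ → ℝ)
    (hUexp : ∀ u : Lp ℝ 2 μ,
      Uexp u = ∫ p in Set.univ ×ˢ OU, γ p * (Real.exp (W p) * u p) ∂μ)
    (cW κ R R' L : ℝ)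
    (hcW : cW = Real.exp M)
    (hκ : κ = γinf * Real.sqrt (aplus * (volume OU).toReal))
    (hR : 0 < R) (hR' : R' = cW * κ * R)
    (hL : 0 ≤ L)
    (hLip : ∀ r r' : ℝ, |r| ≤ R' → |r'| ≤ R' →
      ∀ᵐ p ∂μ, |μS p r - μS p r'| ≤ L * |r - r'|)
    (S₁ : Lp ℝ 2 μ → (ℝ × (Fin d → ℝ)) → ℝ)
    (hS₁ : ∀ (u : Lp ℝ 2 μ) (p : ℝ × (Fin d → ℝ)),
      S₁ u p = μS p (Uexp u) * u p) :
    (∀ u : Lp ℝ 2 μ, MemLp (S₁ u) 2 μ) ∧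
    (∀ u v : Lp ℝ 2 μ, ‖u‖ ≤ R → ‖v‖ ≤ R →
      eLpNorm (S₁ u - S₁ v) 2 μ ≤
        ENNReal.ofReal ((cW * L * κ * R + μinf) * ‖u - v‖)) := by
  -- basic positivity facts
  have hcW0 : 0 < cW := hcW ▸ Real.exp_pos M
  have hκ0 : 0 ≤ κ := by rw [hκ]; positivity
  -- measurability of `p ↦ μS p r`
  have hμSr : ∀ r : ℝ, Measurable (fun p => μS p r) := fun r =>
    hμSm.comp (measurable_id.prodMk measurable_const)
  -- finiteness of μ
  have hOfin : volume O < ∞ := hObd.measure_lt_top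
  haveI : IsFiniteMeasure (volume.restrict (Set.Ioo (0:ℝ) aplus)) := ⟨by
    rw [Measure.restrict_apply_univ, Real.volume_Ioo]; exact ENNReal.ofReal_lt_top⟩
  haveI : IsFiniteMeasure (volume.restrict O) := ⟨by
    rw [Measure.restrict_apply_univ]; exact hOfin⟩
  haveI : IsFiniteMeasure μ := by rw [hμ]; infer_instance
  set S : Set (ℝ × (Fin d → ℝ)) := Set.univ ×ˢ OU with hS
  have hμSval : μ S = ENNReal.ofReal aplus * volume OU := by
    rw [hμ, hS, Measure.prod_prod, Measure.restrict_apply_univ,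
      Measure.restrict_apply hOUm, Set.inter_eq_left.mpr hOUO, Real.volume_Ioo, sub_zero]
  have hOUfin : volume OU < ∞ := lt_of_le_of_lt (measure_mono hOUO) hOfin
  have hμSfin : μ S ≠ ∞ := by
    rw [hμSval]; exact ENNReal.mul_ne_top ENNReal.ofReal_ne_top hOUfin.ne
  have hμStoReal : (μ S).toReal = aplus * (volume OU).toReal := by
    rw [hμSval, ENNReal.toReal_mul, ENNReal.toReal_ofReal ha.le]
  -- norm of Lp elements via eLpNorm
  have hnorm : ∀ w : Lp ℝ 2 μ, eLpNorm (w : ℝ × (Fin d → ℝ) → ℝ) 2 μ = ENNReal.ofReal ‖w‖ := by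
    intro w
    rw [Lp.norm_def, ENNReal.ofReal_toReal (Lp.eLpNorm_ne_top w)]
  have hWb' : ∀ᵐ p ∂(μ.restrict S), |W p| ≤ M := ae_restrict_of_ae hWb
  -- the key estimate for the weighted functional
  have key : ∀ w : Lp ℝ 2 μ,
      Integrable (fun p => γ p * (Real.exp (W p) * w p)) (μ.restrict S) ∧
      |∫ p in S, γ p * (Real.exp (W p) * w p) ∂μ| ≤ cW * κ * ‖w‖ := by
    intro w
    have hw2 : MemLp (w : ℝ × (Fin d → ℝ) → ℝ) 2 (μ.restrict S) := (Lp.memLp w).restrict S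
    have hw1 : Integrable (w : ℝ × (Fin d → ℝ) → ℝ) (μ.restrict S) :=
      memLp_one_iff_integrable.mp (hw2.mono_exponent (by norm_num))
    have hfm : AEStronglyMeasurable (fun p => γ p * (Real.exp (W p) * w p)) (μ.restrict S) :=
      (hγm.aestronglyMeasurable.mul ((Real.measurable_exp.comp hWm).aestronglyMeasurable.mul
        (Lp.aestronglyMeasurable w))).restrict
    have habs : ∀ᵐ p ∂(μ.restrict S),
        ‖γ p * (Real.exp (W p) * w p)‖ ≤ γinf * Real.exp M * |w p| := by
      filter_upwards [hγb, hWb'] with p hγp hWp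
      have h1 : |γ p| ≤ γinf := abs_le.mpr ⟨by linarith [hγp.1], hγp.2⟩
      have h2 : Real.exp (W p) ≤ Real.exp M := Real.exp_le_exp.mpr (le_of_abs_le hWp)
      calc ‖γ p * (Real.exp (W p) * w p)‖ = |γ p| * (Real.exp (W p) * |w p|) := by
            rw [Real.norm_eq_abs, abs_mul, abs_mul, abs_of_pos (Real.exp_pos _)]
        _ ≤ γinf * (Real.exp M * |w p|) :=
            mul_le_mul h1 (mul_le_mul_of_nonneg_right h2 (abs_nonneg _)) (by positivity) hγinf
        _ = γinf * Real.exp M * |w p| := by ring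
    have hgint : Integrable (fun p => γinf * Real.exp M * |w p|) (μ.restrict S) :=
      (hw1.abs).const_mul _
    have hint : Integrable (fun p => γ p * (Real.exp (W p) * w p)) (μ.restrict S) :=
      hgint.mono' hfm habs
    refine ⟨hint, ?_⟩
    have h1 : |∫ p in S, γ p * (Real.exp (W p) * w p) ∂μ|
        ≤ ∫ p in S, γinf * Real.exp M * |w p| ∂μ :=
      (norm_integral_le_integral_norm _).trans (integral_mono_ae hint.norm hgint habs)
    have h2 : ∫ p in S, γinf * Real.exp M * |w p| ∂μ
        = γinf * Real.exp M * ∫ p in S, |w p| ∂μ := integral_const_mul _ _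
    have h3 : ∫ p in S, |w p| ∂μ ≤ Real.sqrt ((μ S).toReal) * ‖w‖ := by
      have e1 : ∫ p in S, |w p| ∂μ = (eLpNorm (w : ℝ × (Fin d → ℝ) → ℝ) 1 (μ.restrict S)).toReal := by
        rw [eLpNorm_one_eq_lintegral_enorm,
          ← integral_norm_eq_lintegral_enorm (Lp.aestronglyMeasurable w).restrict]
        simp [Real.norm_eq_abs]
      have e2 : eLpNorm (w : ℝ × (Fin d → ℝ) → ℝ) 1 (μ.restrict S)
          ≤ eLpNorm (w : ℝ × (Fin d → ℝ) → ℝ) 2 (μ.restrict S) * (μ S) ^ (1/2 : ℝ) := by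
        have h := eLpNorm_le_eLpNorm_mul_rpow_measure_univ (μ := μ.restrict S)
          (p := 1) (q := 2) (by norm_num) (Lp.aestronglyMeasurable w).restrict
        have h12 : 1 / (1:ℝ≥0∞).toReal - 1 / (2:ℝ≥0∞).toReal = (1/2 : ℝ) := by norm_num
        rwa [Measure.restrict_apply_univ, h12] at h
      have e3 : eLpNorm (w : ℝ × (Fin d → ℝ) → ℝ) 2 (μ.restrict S) ≤ ENNReal.ofReal ‖w‖ := by
        rw [← hnorm w]
        exact eLpNorm_mono_measure _ Measure.restrict_le_self
      have e4 : eLpNorm (w : ℝ × (Fin d → ℝ) → ℝ) 1 (μ.restrict S)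
          ≤ ENNReal.ofReal ‖w‖ * (μ S) ^ (1/2 : ℝ) :=
        e2.trans (mul_le_mul_left e3 _)
      have hfin : ENNReal.ofReal ‖w‖ * (μ S) ^ (1/2 : ℝ) ≠ ∞ :=
        ENNReal.mul_ne_top ENNReal.ofReal_ne_top
          (ENNReal.rpow_ne_top_of_nonneg (by norm_num) hμSfin)
      have e5 := ENNReal.toReal_mono hfin e4
      rw [e1]
      calc (eLpNorm (w : ℝ × (Fin d → ℝ) → ℝ) 1 (μ.restrict S)).toReal
          ≤ (ENNReal.ofReal ‖w‖ * (μ S) ^ (1/2 : ℝ)).toReal := e5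
        _ = ‖w‖ * ((μ S) ^ (1/2 : ℝ)).toReal := by
            rw [ENNReal.toReal_mul, ENNReal.toReal_ofReal (norm_nonneg _)]
        _ = ‖w‖ * Real.sqrt ((μ S).toReal) := by
            rw [← ENNReal.toReal_rpow, Real.sqrt_eq_rpow]
        _ = Real.sqrt ((μ S).toReal) * ‖w‖ := mul_comm _ _
    calc |∫ p in S, γ p * (Real.exp (W p) * w p) ∂μ|
        ≤ γinf * Real.exp M * ∫ p in S, |w p| ∂μ := by rw [← h2]; exact h1
      _ ≤ γinf * Real.exp M * (Real.sqrt ((μ S).toReal) * ‖w‖) :=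
          mul_le_mul_of_nonneg_left h3 (by positivity)
      _ = cW * κ * ‖w‖ := by
          rw [hcW, hκ, hμStoReal]; ring
  -- |Uexp u| ≤ R' for ‖u‖ ≤ R
  have hUR' : ∀ u : Lp ℝ 2 μ, ‖u‖ ≤ R → |Uexp u| ≤ R' := by
    intro u hu
    rw [hUexp, hR']
    exact (key u).2.trans (mul_le_mul_of_nonneg_left hu (by positivity))
  -- |Uexp u - Uexp v| ≤ cW κ ‖u - v‖
  have hUdiff : ∀ u v : Lp ℝ 2 μ, |Uexp u - Uexp v| ≤ cW * κ * ‖u - v‖ := by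
    intro u v
    have hsub : ∫ p in S, γ p * (Real.exp (W p) * (u - v : Lp ℝ 2 μ) p) ∂μ
        = Uexp u - Uexp v := by
      rw [hUexp, hUexp]
      rw [← integral_sub (key u).1 (key v).1]
      refine integral_congr_ae ?_
      filter_upwards [ae_restrict_of_ae (Lp.coeFn_sub u v)] with p hp
      rw [hp]; simp; ring
    have := (key (u - v)).2
    rwa [hsub] at this
  constructor
  · -- mapping into H
    intro u
    have hfun : S₁ u = fun p => μS p (Uexp u) * u p := funext (hS₁ u)
    rw [hfun]
    refine MemLp.of_le ((Lp.memLp u).const_mul μinf)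
      ((hμSr (Uexp u)).aestronglyMeasurable.mul (Lp.aestronglyMeasurable u)) ?_
    filter_upwards [hμSb (Uexp u)] with p hp
    rw [Real.norm_eq_abs, Real.norm_eq_abs, abs_mul, abs_mul]
    refine mul_le_mul_of_nonneg_right ?_ (abs_nonneg _)
    rw [abs_of_nonneg hp.1]
    exact hp.2.trans (le_abs_self _)
  · -- local Lipschitz estimate
    intro u v hu hv
    by_cases h0 : μ = 0
    · have hz : eLpNorm (S₁ u - S₁ v) 2 μ = eLpNorm (S₁ u - S₁ v) 2 (0 : Measure _) :=
        congrArg _ h0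
      rw [hz, eLpNorm_measure_zero]; exact zero_le
    have hμinf : 0 ≤ μinf := by
      haveI : (MeasureTheory.ae μ).NeBot := MeasureTheory.ae_neBot.mpr h0
      obtain ⟨p, hp1, hp2⟩ := (hμSb 0).exists
      linarith
    set ru := Uexp u with hruDef
    set rv := Uexp v with hrvDef
    have hru : |ru| ≤ R' := hUR' u hu
    have hrv : |rv| ≤ R' := hUR' v hv
    have hdru : |ru - rv| ≤ cW * κ * ‖u - v‖ := hUdiff u v
    have hfun : S₁ u - S₁ v
        = (fun p => (μS p ru - μS p rv) * u p) + (fun p => μS p rv * (u p - v p)) := by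
      funext p
      simp only [Pi.sub_apply, Pi.add_apply, hS₁]
      ring
    rw [hfun]
    have hD : AEStronglyMeasurable (fun p => (μS p ru - μS p rv) * u p) μ :=
      ((hμSr ru).sub (hμSr rv)).aestronglyMeasurable.mul (Lp.aestronglyMeasurable u)
    have hE : AEStronglyMeasurable (fun p => μS p rv * (u p - v p)) μ :=
      (hμSr rv).aestronglyMeasurable.mul
        ((Lp.aestronglyMeasurable u).sub (Lp.aestronglyMeasurable v))
    have hDb : eLpNorm (fun p => (μS p ru - μS p rv) * u p) 2 μ
        ≤ ENNReal.ofReal (cW * L * κ * R * ‖u - v‖) := by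
      have hconst : (0:ℝ) ≤ cW * L * κ * ‖u - v‖ := by positivity
      have bd : ∀ᵐ p ∂μ, ‖(μS p ru - μS p rv) * u p‖
          ≤ ‖(cW * L * κ * ‖u - v‖) * u p‖ := by
        filter_upwards [hLip ru rv hru hrv] with p hp
        rw [Real.norm_eq_abs, Real.norm_eq_abs, abs_mul, abs_mul]
        refine mul_le_mul_of_nonneg_right ?_ (abs_nonneg _)
        have h2 : L * |ru - rv| ≤ cW * L * κ * ‖u - v‖ := by
          calc L * |ru - rv| ≤ L * (cW * κ * ‖u - v‖) := mul_le_mul_of_nonneg_left hdru hL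
            _ = cW * L * κ * ‖u - v‖ := by ring
        exact (hp.trans h2).trans (le_abs_self _)
      calc eLpNorm (fun p => (μS p ru - μS p rv) * u p) 2 μ
          ≤ eLpNorm (fun p => (cW * L * κ * ‖u - v‖) * u p) 2 μ := eLpNorm_mono_ae bd
        _ = ‖(cW * L * κ * ‖u - v‖)‖ₑ * eLpNorm (u : ℝ × (Fin d → ℝ) → ℝ) 2 μ := by
            exact
              eLpNorm_const_smul (𝕜 := ℝ) (cW * L * κ * ‖u - v‖)
                ((u : ℝ × (Fin d → ℝ) → ℝ)) 2 μ
        _ ≤ ENNReal.ofReal (cW * L * κ * ‖u - v‖) * ENNReal.ofReal R := by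
            rw [Real.enorm_eq_ofReal hconst, hnorm u]
            exact mul_le_mul_right (ENNReal.ofReal_le_ofReal hu) _
        _ = ENNReal.ofReal (cW * L * κ * R * ‖u - v‖) := by
            rw [← ENNReal.ofReal_mul hconst]; ring_nf
    have hEb : eLpNorm (fun p => μS p rv * (u p - v p)) 2 μ
        ≤ ENNReal.ofReal (μinf * ‖u - v‖) := by
      have bd : ∀ᵐ p ∂μ, ‖μS p rv * (u p - v p)‖ ≤ ‖μinf * (u p - v p)‖ := by
        filter_upwards [hμSb rv] with p hp
        rw [Real.norm_eq_abs, Real.norm_eq_abs, abs_mul, abs_mul]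
        refine mul_le_mul_of_nonneg_right ?_ (abs_nonneg _)
        rw [abs_of_nonneg hp.1]
        exact hp.2.trans (le_abs_self _)
      calc eLpNorm (fun p => μS p rv * (u p - v p)) 2 μ
          ≤ eLpNorm (fun p => μinf * (u p - v p)) 2 μ := eLpNorm_mono_ae bd
        _ = ‖μinf‖ₑ * eLpNorm (fun p => u p - v p) 2 μ := by
            exact
              eLpNorm_const_smul (𝕜 := ℝ) μinf (fun p => u p - v p) 2 μ
        _ = ENNReal.ofReal μinf * ENNReal.ofReal ‖u - v‖ := by
            rw [Real.enorm_eq_ofReal hμinf, ← hnorm (u - v)]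
            congr 1
            exact eLpNorm_congr_ae (Lp.coeFn_sub u v).symm
        _ = ENNReal.ofReal (μinf * ‖u - v‖) := (ENNReal.ofReal_mul hμinf).symm
    calc eLpNorm ((fun p => (μS p ru - μS p rv) * u p)
            + (fun p => μS p rv * (u p - v p))) 2 μ
        ≤ eLpNorm (fun p => (μS p ru - μS p rv) * u p) 2 μ
            + eLpNorm (fun p => μS p rv * (u p - v p)) 2 μ :=
          eLpNorm_add_le hD hE (by norm_num)
      _ ≤ ENNReal.ofReal (cW * L * κ * R * ‖u - v‖) + ENNReal.ofReal (μinf * ‖u - v‖) :=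
          add_le_add hDb hEb
      _ = ENNReal.ofReal ((cW * L * κ * R + μinf) * ‖u - v‖) := by
          rw [← ENNReal.ofReal_add (by positivity) (by positivity)]; ring_nf
end
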